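/- Let X be a completely regular Hausdorff space, A ⊆ X any subset, and Φ_A : C_b(X) → C_b(A) the restriction operator f ↦ f|_A. Then the range of Φ_A is order dense in C_b(A): for every nonzero 0 ≤ f ∈ C_b(A) there exists g ∈ C_b(X) with 0 ≤ g|_A ≤ f and g|_A ≠ 0. -/

import Mathlib

open scoped BoundedContinuousFunction

/-- the range of the restriction operator C_b(X) → C_b(A) is order dense. -/
theorem stmt6 {X : Type*} [TopologicalSpace X] [CompletelyRegularSpace X] [T2Space X]
    (A : Set X) :
    ∀ f : A →ᵇ ℝ, 0 ≤ f → f ≠ 0 →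
      ∃ g : X →ᵇ ℝ,
        0 ≤ g.compContinuous (⟨Subtype.val, continuous_subtype_val⟩ : C(A, X)) ∧
        g.compContinuous (⟨Subtype.val, continuous_subtype_val⟩ : C(A, X)) ≤ f ∧
        g.compContinuous (⟨Subtype.val, continuous_subtype_val⟩ : C(A, X)) ≠ 0 := by
  intro f hf hne
  have hf' : ∀ x, 0 ≤ f x := fun x => hf x
  obtain ⟨a, ha⟩ : ∃ a : A, 0 < f a := by
    by_contra h
    push_neg at h
    exact hne (BoundedContinuousFunction.ext fun x => le_antisymm (h x) (hf' x))
  set c : ℝ := f a with hc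
  -- open set where f > c/2
  have hU : IsOpen (f ⁻¹' Set.Ioi (c / 2)) := isOpen_Ioi.preimage f.continuous
  obtain ⟨V, hV, hVU⟩ := isOpen_induced_iff.mp hU
  have haV : (a : X) ∈ V := by
    have : a ∈ f ⁻¹' Set.Ioi (c / 2) := by
      simp only [Set.mem_preimage, Set.mem_Ioi]
      linarith
    rw [← hVU] at this
    exact this
  obtain ⟨h, hcont, hha, hhK⟩ :=
    CompletelyRegularSpace.completely_regular (a : X) Vᶜ hV.isClosed_compl
      (by simpa using haV)
  set φ : X → ℝ := fun x => (c / 2) * (1 - (h x : ℝ)) with hφ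
  have hφcont : Continuous φ := by
    exact continuous_const.mul (continuous_const.sub (continuous_subtype_val.comp hcont))
  have hφ0 : ∀ x, 0 ≤ φ x := fun x => by
    show 0 ≤ c / 2 * (1 - (h x : ℝ))
    have h1 : (h x : ℝ) ≤ 1 := (h x).2.2
    nlinarith [ha]
  have hφle : ∀ x, φ x ≤ c / 2 := fun x => by
    show c / 2 * (1 - (h x : ℝ)) ≤ c / 2
    have h0 : (0:ℝ) ≤ (h x : ℝ) := (h x).2.1
    nlinarith [ha]
  set g : X →ᵇ ℝ := BoundedContinuousFunction.mkOfBound ⟨φ, hφcont⟩ (c / 2)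
    (fun x y => by
      rw [Real.dist_eq]
      have := hφ0 x; have := hφle x; have := hφ0 y; have := hφle y
      simp only [ContinuousMap.coe_mk]
      rw [abs_le]; constructor <;> linarith) with hg
  refine ⟨g, ?_, ?_, ?_⟩
  · intro x
    exact hφ0 x
  · intro x
    show φ (x : X) ≤ f x
    by_cases hx : (x : X) ∈ V
    · have : x ∈ f ⁻¹' Set.Ioi (c / 2) := by rw [← hVU]; exact hx
      have : c / 2 < f x := this
      linarith [hφle (x : X)]
    · have : h (x : X) = 1 := hhK hx
      simp [hφ, this]
      exact hf' x
  · intro h0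
    have : φ (a : X) = 0 := by
      have := congrArg (fun k => k a) h0
      simp at this; exact this
    have h2 : c / 2 * (1 - ((h (a : X)) : ℝ)) = 0 := this
    rw [hha] at h2
    simp only [Set.Icc.coe_zero, sub_zero, mul_one] at h2
    linarith
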